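/- Let w, h > 0 and let γ be a closed rectifiable curve in ℝ² whose image intersects each of the four closed sides of the axis-aligned rectangle [0, w] × [0, h]. Then the length of γ is at least 2·√(w² + h²). -/

import Mathlib

open Set Metric MeasureTheory Real

lemma cyc4 (a b c d u v : ℝ) (hu : u = a ∨ u = b ∨ u = c ∨ u = d)
    (hv : v = a ∨ v = b ∨ v = c ∨ v = d) :
    2 * |u - v| ≤ |a - b| + |b - c| + |c - d| + |d - a| := by
  rcases hu with h | h | h | h <;> rcases hv with h' | h' | h' | h' <;> rw [h, h'] <;>
    linarith [abs_nonneg (a - b), abs_nonneg (b - c), abs_nonneg (c - d), abs_nonneg (d - a),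
      (by simp : |a - (a:ℝ)| = 0), (by simp : |b - (b:ℝ)| = 0),
      (by simp : |c - (c:ℝ)| = 0), (by simp : |d - (d:ℝ)| = 0),
      abs_sub_comm a b, abs_sub_comm b c, abs_sub_comm c d, abs_sub_comm d a,
      abs_sub_comm a c, abs_sub_comm b d,
      abs_sub_le a b c, abs_sub_le b c d, abs_sub_le c d a, abs_sub_le d a b,
      abs_sub_le a b d, abs_sub_le b c a, abs_sub_le c d b, abs_sub_le d a c,
      abs_sub_le a c d, abs_sub_le b d a, abs_sub_le c a b, abs_sub_le d b c,
      abs_sub_le a d c, abs_sub_le b a d, abs_sub_le c b a, abs_sub_le d c b]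

lemma dlb (w h : ℝ) (hw : 0 ≤ w) (hh : 0 ≤ h) (P Q : EuclideanSpace ℝ (Fin 2)) :
    w * |P 0 - Q 0| + h * |P 1 - Q 1| ≤ Real.sqrt (w ^ 2 + h ^ 2) * dist P Q := by
  rw [EuclideanSpace.dist_eq, Fin.sum_univ_two, ← Real.sqrt_mul (by positivity),
    show dist (P 0) (Q 0) ^ 2 + dist (P 1) (Q 1) ^ 2
      = (P 0 - Q 0) ^ 2 + (P 1 - Q 1) ^ 2 by rw [Real.dist_eq, Real.dist_eq, sq_abs, sq_abs]]
  refine (Real.le_sqrt (by positivity) (by positivity)).2 ?_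
  nlinarith [sq_nonneg (h * |P 0 - Q 0| - w * |P 1 - Q 1|), sq_abs (P 0 - Q 0),
    sq_abs (P 1 - Q 1), abs_nonneg (P 0 - Q 0), abs_nonneg (P 1 - Q 1)]

lemma perim_ge (w h : ℝ) (hw : 0 < w) (hh : 0 < h) (A B C D : EuclideanSpace ℝ (Fin 2))
    (hx0 : A 0 = 0 ∨ B 0 = 0 ∨ C 0 = 0 ∨ D 0 = 0)
    (hxw : A 0 = w ∨ B 0 = w ∨ C 0 = w ∨ D 0 = w)
    (hy0 : A 1 = 0 ∨ B 1 = 0 ∨ C 1 = 0 ∨ D 1 = 0)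
    (hyh : A 1 = h ∨ B 1 = h ∨ C 1 = h ∨ D 1 = h) :
    2 * Real.sqrt (w ^ 2 + h ^ 2) ≤ dist A B + dist B C + dist C D + dist D A := by
  have hx : 2 * w ≤ |A 0 - B 0| + |B 0 - C 0| + |C 0 - D 0| + |D 0 - A 0| := by
    clear hy0 hyh
    rw [show 2 * w = 2 * |(0:ℝ) - w| by rw [zero_sub, abs_neg, abs_of_pos hw]]
    rcases hxw with f | f | f | f <;> rw [← f] <;>
      rcases hx0 with e | e | e | e <;> rw [← e] <;>
      exact cyc4 _ _ _ _ _ _ (by tauto) (by tauto)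
  have hy : 2 * h ≤ |A 1 - B 1| + |B 1 - C 1| + |C 1 - D 1| + |D 1 - A 1| := by
    clear hx0 hxw
    rw [show 2 * h = 2 * |(0:ℝ) - h| by rw [zero_sub, abs_neg, abs_of_pos hh]]
    rcases hyh with f | f | f | f <;> rw [← f] <;>
      rcases hy0 with e | e | e | e <;> rw [← e] <;>
      exact cyc4 _ _ _ _ _ _ (by tauto) (by tauto)
  have d1 := dlb w h hw.le hh.le A B
  have d2 := dlb w h hw.le hh.le B C
  have d3 := dlb w h hw.le hh.le C D
  have d4 := dlb w h hw.le hh.le D A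
  have key : 2 * (w ^ 2 + h ^ 2)
      ≤ Real.sqrt (w ^ 2 + h ^ 2) * (dist A B + dist B C + dist C D + dist D A) := by
    nlinarith [mul_le_mul_of_nonneg_left hx hw.le, mul_le_mul_of_nonneg_left hy hh.le]
  nlinarith [key, Real.sq_sqrt (show (0:ℝ) ≤ w ^ 2 + h ^ 2 by positivity),
    Real.sqrt_pos.mpr (show (0:ℝ) < w ^ 2 + h ^ 2 by positivity)]

lemma chain_le (γ : ℝ → EuclideanSpace ℝ (Fin 2)) (hclosed : γ 0 = γ 1)
    (a b c d : ℝ) (ha : a ∈ Icc (0:ℝ) 1) (hb : b ∈ Icc (0:ℝ) 1) (hc : c ∈ Icc (0:ℝ) 1)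
    (hd : d ∈ Icc (0:ℝ) 1) (hab : a ≤ b) (hbc : b ≤ c) (hcd : c ≤ d) :
    edist (γ a) (γ b) + edist (γ b) (γ c) + edist (γ c) (γ d) + edist (γ d) (γ a)
      ≤ eVariationOn γ (Icc 0 1) := by
  set u : ℕ → ℝ := fun n =>
    if n = 0 then 0 else if n = 1 then a else if n = 2 then b
    else if n = 3 then c else if n = 4 then d else 1 with hu_def
  have hu : Monotone u := by
    apply monotone_nat_of_le_succ
    intro n
    rcases n with _ | _ | _ | _ | _ | n <;>
      simp [hu_def] <;> first | exact ha.1 | exact hab | exact hbc | exact hcd | exact hd.2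
  have us : ∀ i, u i ∈ Icc (0:ℝ) 1 := by
    intro i
    rcases i with _ | _ | _ | _ | _ | i <;>
      simp [hu_def] <;> first | exact ha | exact hb | exact hc | exact hd
  have H := eVariationOn.sum_le (f := γ) (n := 5) hu us
  simp only [Finset.sum_range_succ, Finset.sum_range_zero, zero_add, hu_def] at H
  norm_num at H
  -- H should be a 5-term sum ≤ eVariationOn
  have tri : edist (γ d) (γ a) ≤ edist (γ 1) (γ d) + edist (γ a) (γ 0) := by
    calc edist (γ d) (γ a) ≤ edist (γ d) (γ 1) + edist (γ 1) (γ a) := edist_triangle _ _ _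
    _ = edist (γ 1) (γ d) + edist (γ a) (γ 0) := by rw [hclosed, edist_comm (γ d), edist_comm (γ a)]
  calc edist (γ a) (γ b) + edist (γ b) (γ c) + edist (γ c) (γ d) + edist (γ d) (γ a)
      ≤ edist (γ a) (γ b) + edist (γ b) (γ c) + edist (γ c) (γ d)
        + (edist (γ 1) (γ d) + edist (γ a) (γ 0)) := by gcongr
    _ ≤ eVariationOn γ (Icc 0 1) := by
        rw [edist_comm (γ a) (γ b), edist_comm (γ b) (γ c), edist_comm (γ c) (γ d)]
        calc edist (γ b) (γ a) + edist (γ c) (γ b) + edist (γ d) (γ c)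
            + (edist (γ 1) (γ d) + edist (γ a) (γ 0))
            = edist (γ a) (γ 0) + edist (γ b) (γ a) + edist (γ c) (γ b) + edist (γ d) (γ c)
              + edist (γ 1) (γ d) := by ring
          _ ≤ eVariationOn γ (Icc 0 1) := H

lemma main_aux (w h : ℝ) (hw : 0 < w) (hh : 0 < h) (γ : ℝ → EuclideanSpace ℝ (Fin 2))
    (hclosed : γ 0 = γ 1) (a b c d : ℝ)
    (ha : a ∈ Icc (0:ℝ) 1) (hb : b ∈ Icc (0:ℝ) 1) (hc : c ∈ Icc (0:ℝ) 1) (hd : d ∈ Icc (0:ℝ) 1)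
    (hab : a ≤ b) (hbc : b ≤ c) (hcd : c ≤ d)
    (hx0 : γ a 0 = 0 ∨ γ b 0 = 0 ∨ γ c 0 = 0 ∨ γ d 0 = 0)
    (hxw : γ a 0 = w ∨ γ b 0 = w ∨ γ c 0 = w ∨ γ d 0 = w)
    (hy0 : γ a 1 = 0 ∨ γ b 1 = 0 ∨ γ c 1 = 0 ∨ γ d 1 = 0)
    (hyh : γ a 1 = h ∨ γ b 1 = h ∨ γ c 1 = h ∨ γ d 1 = h) :
    ENNReal.ofReal (2 * Real.sqrt (w ^ 2 + h ^ 2)) ≤ eVariationOn γ (Icc 0 1) := by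
  refine le_trans ?_ (chain_le γ hclosed a b c d ha hb hc hd hab hbc hcd)
  have hperim := perim_ge w h hw hh (γ a) (γ b) (γ c) (γ d) hx0 hxw hy0 hyh
  calc ENNReal.ofReal (2 * Real.sqrt (w ^ 2 + h ^ 2))
      ≤ ENNReal.ofReal (dist (γ a) (γ b) + dist (γ b) (γ c) + dist (γ c) (γ d)
          + dist (γ d) (γ a)) := ENNReal.ofReal_le_ofReal hperim
    _ = edist (γ a) (γ b) + edist (γ b) (γ c) + edist (γ c) (γ d) + edist (γ d) (γ a) := by
        rw [ENNReal.ofReal_add (by positivity) dist_nonneg,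
          ENNReal.ofReal_add (by positivity) dist_nonneg,
          ENNReal.ofReal_add dist_nonneg dist_nonneg] <;> simp [edist_dist]

/-- A closed rectifiable curve touching all four sides of the axis-aligned rectangle
`[0,w] × [0,h]` has length at least twice the diagonal, `2√(w² + h²)`. -/
theorem stmt_5 (w h : ℝ) (hw : 0 < w) (hh : 0 < h)
    (γ : ℝ → EuclideanSpace ℝ (Fin 2))
    (hcont : ContinuousOn γ (Icc 0 1))
    (hclosed : γ 0 = γ 1)
    (hbottom : ((γ '' Icc 0 1) ∩ {p | p 0 ∈ Icc 0 w ∧ p 1 = 0}).Nonempty)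
    (htop : ((γ '' Icc 0 1) ∩ {p | p 0 ∈ Icc 0 w ∧ p 1 = h}).Nonempty)
    (hleft : ((γ '' Icc 0 1) ∩ {p | p 0 = 0 ∧ p 1 ∈ Icc 0 h}).Nonempty)
    (hright : ((γ '' Icc 0 1) ∩ {p | p 0 = w ∧ p 1 ∈ Icc 0 h}).Nonempty) :
    ENNReal.ofReal (2 * Real.sqrt (w ^ 2 + h ^ 2)) ≤ eVariationOn γ (Icc 0 1) := by
  obtain ⟨_, ⟨tB, mB, rfl⟩, -, fB⟩ := hbottom
  obtain ⟨_, ⟨tT, mT, rfl⟩, -, fT⟩ := htop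
  obtain ⟨_, ⟨tL, mL, rfl⟩, fL, -⟩ := hleft
  obtain ⟨_, ⟨tR, mR, rfl⟩, fR, -⟩ := hright
  clear hcont
  rcases le_total tT tB with hcmp1 | hcmp1
  ·
    rcases le_total tL tT with hcmp2 | hcmp2
    ·
      rcases le_total tR tL with hcmp3 | hcmp3
      ·
        exact main_aux w h hw hh γ hclosed tR tL tT tB mR mL mT mB (by linarith) (by linarith) (by linarith) (by tauto) (by tauto) (by tauto) (by tauto)
      ·
        rcases le_total tR tT with hcmp4 | hcmp4
        ·
          exact main_aux w h hw hh γ hclosed tL tR tT tB mL mR mT mB (by linarith) (by linarith) (by linarith) (by tauto) (by tauto) (by tauto) (by tauto)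
        ·
          rcases le_total tR tB with hcmp5 | hcmp5
          ·
            exact main_aux w h hw hh γ hclosed tL tT tR tB mL mT mR mB (by linarith) (by linarith) (by linarith) (by tauto) (by tauto) (by tauto) (by tauto)
          ·
            exact main_aux w h hw hh γ hclosed tL tT tB tR mL mT mB mR (by linarith) (by linarith) (by linarith) (by tauto) (by tauto) (by tauto) (by tauto)
    ·
      rcases le_total tL tB with hcmp6 | hcmp6
      ·
        rcases le_total tR tT with hcmp7 | hcmp7
        ·
          exact main_aux w h hw hh γ hclosed tR tT tL tB mR mT mL mB (by linarith) (by linarith) (by linarith) (by tauto) (by tauto) (by tauto) (by tauto)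
        ·
          rcases le_total tR tL with hcmp8 | hcmp8
          ·
            exact main_aux w h hw hh γ hclosed tT tR tL tB mT mR mL mB (by linarith) (by linarith) (by linarith) (by tauto) (by tauto) (by tauto) (by tauto)
          ·
            rcases le_total tR tB with hcmp9 | hcmp9
            ·
              exact main_aux w h hw hh γ hclosed tT tL tR tB mT mL mR mB (by linarith) (by linarith) (by linarith) (by tauto) (by tauto) (by tauto) (by tauto)
            ·
              exact main_aux w h hw hh γ hclosed tT tL tB tR mT mL mB mR (by linarith) (by linarith) (by linarith) (by tauto) (by tauto) (by tauto) (by tauto)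
      ·
        rcases le_total tR tT with hcmp10 | hcmp10
        ·
          exact main_aux w h hw hh γ hclosed tR tT tB tL mR mT mB mL (by linarith) (by linarith) (by linarith) (by tauto) (by tauto) (by tauto) (by tauto)
        ·
          rcases le_total tR tB with hcmp11 | hcmp11
          ·
            exact main_aux w h hw hh γ hclosed tT tR tB tL mT mR mB mL (by linarith) (by linarith) (by linarith) (by tauto) (by tauto) (by tauto) (by tauto)
          ·
            rcases le_total tR tL with hcmp12 | hcmp12
            ·
              exact main_aux w h hw hh γ hclosed tT tB tR tL mT mB mR mL (by linarith) (by linarith) (by linarith) (by tauto) (by tauto) (by tauto) (by tauto)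
            ·
              exact main_aux w h hw hh γ hclosed tT tB tL tR mT mB mL mR (by linarith) (by linarith) (by linarith) (by tauto) (by tauto) (by tauto) (by tauto)
  ·
    rcases le_total tL tB with hcmp13 | hcmp13
    ·
      rcases le_total tR tL with hcmp14 | hcmp14
      ·
        exact main_aux w h hw hh γ hclosed tR tL tB tT mR mL mB mT (by linarith) (by linarith) (by linarith) (by tauto) (by tauto) (by tauto) (by tauto)
      ·
        rcases le_total tR tB with hcmp15 | hcmp15
        ·
          exact main_aux w h hw hh γ hclosed tL tR tB tT mL mR mB mT (by linarith) (by linarith) (by linarith) (by tauto) (by tauto) (by tauto) (by tauto)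
        ·
          rcases le_total tR tT with hcmp16 | hcmp16
          ·
            exact main_aux w h hw hh γ hclosed tL tB tR tT mL mB mR mT (by linarith) (by linarith) (by linarith) (by tauto) (by tauto) (by tauto) (by tauto)
          ·
            exact main_aux w h hw hh γ hclosed tL tB tT tR mL mB mT mR (by linarith) (by linarith) (by linarith) (by tauto) (by tauto) (by tauto) (by tauto)
    ·
      rcases le_total tL tT with hcmp17 | hcmp17
      ·
        rcases le_total tR tB with hcmp18 | hcmp18
        ·
          exact main_aux w h hw hh γ hclosed tR tB tL tT mR mB mL mT (by linarith) (by linarith) (by linarith) (by tauto) (by tauto) (by tauto) (by tauto)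
        ·
          rcases le_total tR tL with hcmp19 | hcmp19
          ·
            exact main_aux w h hw hh γ hclosed tB tR tL tT mB mR mL mT (by linarith) (by linarith) (by linarith) (by tauto) (by tauto) (by tauto) (by tauto)
          ·
            rcases le_total tR tT with hcmp20 | hcmp20
            ·
              exact main_aux w h hw hh γ hclosed tB tL tR tT mB mL mR mT (by linarith) (by linarith) (by linarith) (by tauto) (by tauto) (by tauto) (by tauto)
            ·
              exact main_aux w h hw hh γ hclosed tB tL tT tR mB mL mT mR (by linarith) (by linarith) (by linarith) (by tauto) (by tauto) (by tauto) (by tauto)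
      ·
        rcases le_total tR tB with hcmp21 | hcmp21
        ·
          exact main_aux w h hw hh γ hclosed tR tB tT tL mR mB mT mL (by linarith) (by linarith) (by linarith) (by tauto) (by tauto) (by tauto) (by tauto)
        ·
          rcases le_total tR tT with hcmp22 | hcmp22
          ·
            exact main_aux w h hw hh γ hclosed tB tR tT tL mB mR mT mL (by linarith) (by linarith) (by linarith) (by tauto) (by tauto) (by tauto) (by tauto)
          ·
            rcases le_total tR tL with hcmp23 | hcmp23
            ·
              exact main_aux w h hw hh γ hclosed tB tT tR tL mB mT mR mL (by linarith) (by linarith) (by linarith) (by tauto) (by tauto) (by tauto) (by tauto)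
            ·
              exact main_aux w h hw hh γ hclosed tB tT tL tR mB mT mL mR (by linarith) (by linarith) (by linarith) (by tauto) (by tauto) (by tauto) (by tauto)
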